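/- Fix ρ > 0, 0 ≤ A < B, R ≥ 0, Ā_j ≥ 0 (with Ā = Ā_j + A, where we also use coefficients C2 = Ā_j/2, C5 = R̄_j + Ā_j·ρ ≥ 0). Let uB = (R + A·ρ)/(B - A) and consider J(v) = J_H(uB, v) given by equation (17) of the paper. Then the second derivative of J with respect to v satisfies J''(v) = (R² + 2·B·ρ·R + A·B·ρ²) / ((B - A)·(ρ + uB + v)³) > 0 for all v ≥ 0 whenever R > 0 or A·B·ρ > 0; hence J is strictly convex on [0,∞). -/

import Mathlib

open Set

theorem rhcp3_case2_convexity (ρ A B R Aj Rj Abar Rbar uB : ℝ)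
    (hρ : 0 < ρ) (hA : 0 ≤ A) (hAB : A < B) (hR : 0 ≤ R)
    (hAj : 0 ≤ Aj) (hRj : 0 ≤ Rj)
    (hAbar : Abar = Aj + A) (hRbar : Rbar = Rj + R)
    (huB : uB = (R + A * ρ) / (B - A))
    (J : ℝ → ℝ)
    (hJ : J = fun v =>
      ((Abar - B) / 2 * uB ^ 2 + (Aj / 2) * v ^ 2 + Aj * uB * v
        + (Rbar + Abar * ρ) * uB + (Rj + Aj * ρ) * v
        + (ρ / 2) * (2 * Rbar + Abar * ρ)) / (ρ + uB + v)) :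
    (∀ v ≥ (0 : ℝ),
      deriv (deriv J) v
        = (R ^ 2 + 2 * B * ρ * R + A * B * ρ ^ 2) / ((B - A) * (ρ + uB + v) ^ 3) ∧
      ((0 < R ∨ 0 < A * B * ρ) → 0 < deriv (deriv J) v)) ∧
    ((0 < R ∨ 0 < A * B * ρ) → StrictConvexOn ℝ (Set.Ici 0) J) := by
  have hBA : (0:ℝ) < B - A := by linarith
  have hB : (0:ℝ) < B := lt_of_le_of_lt hA hAB
  have huB0 : 0 ≤ uB := by
    rw [huB]
    exact div_nonneg (by positivity) hBA.le
  set c := ρ + uB with hc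
  have hcpos : 0 < c := by rw [hc]; linarith
  set a := Aj / 2 with ha
  set D := (Abar - B) / 2 * uB ^ 2 + (Rbar + Abar * ρ) * uB
      + (ρ / 2) * (2 * Rbar + Abar * ρ) with hD
  set b := Aj * uB + Rj + Aj * ρ - a * c with hb
  set K := D - b * c with hK
  have hKval : K * (2 * (B - A)) = R ^ 2 + 2 * B * ρ * R + A * B * ρ ^ 2 := by
    rw [hK, hb, hD, ha, hc, hAbar, hRbar, huB]
    field_simp
    ring
  -- J agrees with the partial-fraction form off the pole
  have hU : IsOpen {w : ℝ | w + c ≠ 0} :=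
    isOpen_compl_singleton.preimage (by fun_prop)
  have hJg : ∀ v : ℝ, v + c ≠ 0 → J v = a * v + b + K * (v + c)⁻¹ := by
    intro v hv
    rw [hJ]
    simp only
    rw [hK, hb, hD, ha]
    have h2 : ρ + uB + v = v + c := by rw [hc]; ring
    rw [h2]
    field_simp
    ring
  have hderiv1 : ∀ v : ℝ, v + c ≠ 0 →
      deriv J v = a - K / (v + c) ^ 2 := by
    intro v hv
    have hg : HasDerivAt (fun w : ℝ => a * w + b + K * (w + c)⁻¹)
        (a - K / (v + c) ^ 2) v := by
      have h1 : HasDerivAt (fun w : ℝ => w + c) 1 v :=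
        (hasDerivAt_id v).add_const c
      have h2 := (h1.inv hv).const_mul K
      have h3 : HasDerivAt (fun w : ℝ => a * w + b) a v := by
        simpa using ((hasDerivAt_id v).const_mul a).add_const b
      refine (h3.add h2).congr_deriv ?_
      field_simp
      ring
    have heq : J =ᶠ[nhds v] fun w => a * w + b + K * (w + c)⁻¹ := by
      filter_upwards [hU.mem_nhds hv] with w hw
      exact hJg w hw
    rw [heq.deriv_eq, hg.deriv]
  have hderiv2 : ∀ v : ℝ, v + c ≠ 0 →
      deriv (deriv J) v = 2 * K / (v + c) ^ 3 := by
    intro v hv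
    have hg : HasDerivAt (fun w : ℝ => a - K / (w + c) ^ 2)
        (2 * K / (v + c) ^ 3) v := by
      have h1 : HasDerivAt (fun w : ℝ => (w + c) ^ 2) (2 * (v + c)) v := by
        exact (((hasDerivAt_id v).add_const c).pow 2).congr_deriv (by simp)
      have h2 := ((h1.inv (pow_ne_zero 2 hv)).const_mul K).const_sub a
      refine h2.congr_deriv ?_
      field_simp
    have heq : deriv J =ᶠ[nhds v] fun w => a - K / (w + c) ^ 2 := by
      filter_upwards [hU.mem_nhds hv] with w hw
      exact hderiv1 w hw
    rw [heq.deriv_eq, hg.deriv]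
  have hmain : ∀ v ≥ (0:ℝ),
      deriv (deriv J) v
        = (R ^ 2 + 2 * B * ρ * R + A * B * ρ ^ 2) / ((B - A) * (ρ + uB + v) ^ 3) := by
    intro v hv
    have hvc : 0 < v + c := by linarith
    rw [hderiv2 v hvc.ne']
    have h2 : ρ + uB + v = v + c := by rw [hc]; ring
    rw [h2, div_eq_div_iff (by positivity) (by positivity)]
    linear_combination (v + c) ^ 3 * hKval
  have hnum : (0 < R ∨ 0 < A * B * ρ) →
      0 < R ^ 2 + 2 * B * ρ * R + A * B * ρ ^ 2 := by
    rintro (h | h)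
    · nlinarith [mul_nonneg (mul_nonneg hB.le hρ.le) hR,
        mul_nonneg (mul_nonneg hA hB.le) (sq_nonneg ρ)]
    · nlinarith [mul_nonneg (mul_nonneg hB.le hρ.le) hR, sq_nonneg R]
  have hpos : ∀ v ≥ (0:ℝ), (0 < R ∨ 0 < A * B * ρ) →
      0 < deriv (deriv J) v := by
    intro v hv h
    rw [hmain v hv]
    have hvc : 0 < ρ + uB + v := by
      have h0 : 0 < ρ + uB := hc ▸ hcpos
      linarith
    exact div_pos (hnum h) (by positivity)
  refine ⟨fun v hv => ⟨hmain v hv, hpos v hv⟩, fun h => ?_⟩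
  apply strictConvexOn_of_deriv2_pos (convex_Ici 0)
  · rw [hJ]
    apply ContinuousOn.div (by fun_prop) (by fun_prop)
    intro x hx
    have hx0 : (0:ℝ) ≤ x := hx
    positivity
  · intro x hx
    rw [interior_Ici] at hx
    exact hpos x (le_of_lt hx) h
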